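/- The skew energy of any oriented cycle on an odd number n of vertices equals 2·cot(π/(2n)). -/

import Mathlib

open Matrix Polynomial Real

/-- The skew energy: the sum of the norms of the eigenvalues (with multiplicity). -/
noncomputable def skewEnergy {V : Type*} [Fintype V] [DecidableEq V]
    (S : Matrix V V ℝ) : ℝ :=
  (((S.map Complex.ofReal).charpoly.roots).map (fun z => ‖z‖)).sum

lemma aux_abs (x : ℝ) (h0 : 0 ≤ x) (h2 : x ≤ 2*π) :
    ‖Complex.exp (x*Complex.I) - 1‖ = 2 * Real.sin (x/2) := by
  have hre : Complex.exp (x*Complex.I) - 1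
      = Complex.ofReal (Real.cos x - 1) + Complex.ofReal (Real.sin x) * Complex.I := by
    rw [Complex.exp_mul_I]
    push_cast
    ring
  have hsin : 0 ≤ Real.sin (x/2) :=
    Real.sin_nonneg_of_nonneg_of_le_pi (by linarith) (by linarith)
  rw [hre, Complex.norm_add_mul_I]
  have hs : (Real.cos x - 1)^2 + Real.sin x ^2 = (2 * Real.sin (x/2))^2 := by
    have h1 := Real.sin_sq_add_cos_sq x
    have h2 := Real.sin_sq_add_cos_sq (x/2)
    have h3 : Real.cos (2*(x/2)) = 2 * Real.cos (x/2)^2 - 1 := Real.cos_two_mul _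
    have h4 : (2:ℝ)*(x/2) = x := by ring
    rw [h4] at h3
    nlinarith
  rw [hs, Real.sqrt_sq (by linarith)]

lemma aux_trig_sum (n : ℕ) (hn : 1 ≤ n) :
    ∑ j ∈ Finset.range n, 2 * Real.sin (π * j / n) = 2 * Real.cot (π / (2*n)) := by
  set α : ℝ := π / (2*n) with hα
  have hnpos : (0:ℝ) < n := by exact_mod_cast hn
  have hαpos : 0 < α := by positivity
  have hn1 : (1:ℝ) ≤ n := by exact_mod_cast hn
  have hαlt : α < π := by
    rw [hα, div_lt_iff₀ (by positivity)]
    nlinarith [Real.pi_pos]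
  have hsinα : 0 < Real.sin α := Real.sin_pos_of_pos_of_lt_pi hαpos hαlt
  have key : ∑ j ∈ Finset.range n, (2 * Real.sin (π * j / n)) * Real.sin α
      = 2 * Real.cos α := by
    have tel := Finset.sum_range_sub (f := fun j : ℕ => -Real.cos (2*(j:ℝ)*α - α)) n
    have hterm : ∀ j ∈ Finset.range n,
        (2 * Real.sin (π * j / n)) * Real.sin α
          = (fun j : ℕ => -Real.cos (2*(j:ℝ)*α - α)) (j+1)
            - (fun j : ℕ => -Real.cos (2*(j:ℝ)*α - α)) j := by
      intro j _
      have hx : π * j / n = 2*(j:ℝ)*α := by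
        rw [hα]; field_simp
      have hc := Real.cos_sub_cos (2*(j:ℝ)*α - α) (2*(j:ℝ)*α + α)
      have e1 : ((2*(j:ℝ)*α - α) + (2*(j:ℝ)*α + α))/2 = 2*(j:ℝ)*α := by ring
      have e2 : ((2*(j:ℝ)*α - α) - (2*(j:ℝ)*α + α))/2 = -α := by ring
      rw [e1, e2, Real.sin_neg] at hc
      simp only []
      push_cast
      rw [hx, show 2*((j:ℝ)+1)*α - α = 2*(j:ℝ)*α + α from by ring]
      linarith [hc]
    rw [Finset.sum_congr rfl hterm, tel]
    have h2n : 2*(n:ℝ)*α = π := by rw [hα]; field_simp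
    have : 2*(n:ℝ)*α - α = π - α := by rw [h2n]
    rw [this, show (2 * ((0:ℕ):ℝ) * α - α) = -α from by norm_num,
      Real.cos_pi_sub, Real.cos_neg]
    ring
  have key2 : (∑ j ∈ Finset.range n, 2 * Real.sin (π * j / n)) * Real.sin α
      = 2 * Real.cos α := by rw [Finset.sum_mul]; exact key
  rw [Real.cot_eq_cos_div_sin, ← mul_div_assoc, eq_div_iff hsinα.ne']
  exact key2

lemma aux_charpoly_eval {m : Type*} [Fintype m] [DecidableEq m] (M : Matrix m m ℂ) (μ : ℂ) :
    M.charpoly.eval μ = (μ • (1 : Matrix m m ℂ) - M).det := by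
  rw [Matrix.charpoly, ← Polynomial.coe_evalRingHom, RingHom.map_det]
  congr 1
  ext i j
  by_cases h : i = j
  · subst h
    simp [Matrix.charmatrix_apply_eq, Matrix.one_apply]
  · simp [Matrix.charmatrix_apply_ne _ _ _ h, Matrix.one_apply, h]

lemma aux_root_of_eigen {m : Type*} [Fintype m] [DecidableEq m] (M : Matrix m m ℂ) (μ : ℂ)
    (v : m → ℂ) (hv : v ≠ 0) (h : M.mulVec v = μ • v) : M.charpoly.IsRoot μ := by
  rw [Polynomial.IsRoot, aux_charpoly_eval]
  rw [← Matrix.exists_mulVec_eq_zero_iff]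
  refine ⟨v, hv, ?_⟩
  rw [Matrix.sub_mulVec, Matrix.smul_mulVec, Matrix.one_mulVec, h, sub_self]

lemma aux_range_zmod (n : ℕ) [NeZero n] (f : ZMod n → ℝ) :
    ∑ k ∈ Finset.range n, f (k : ZMod n) = ∑ a : ZMod n, f a := by
  exact Finset.sum_nbij' (fun k => (k : ZMod n)) (fun a => a.val)
    (fun a _ => Finset.mem_univ _) (fun a _ => Finset.mem_range.mpr (ZMod.val_lt a))
    (fun a ha => ZMod.val_cast_of_lt (Finset.mem_range.mp ha))
    (fun a _ => ZMod.natCast_rightInverse a) (fun a _ => rfl)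

lemma aux_eigen (n : ℕ) [NeZero n] (hn : 3 ≤ n)
    (S : Matrix (ZMod n) (ZMod n) ℝ) (hskew : Sᵀ = -S)
    (hcyc : ∀ i j : ZMod n, (j = i + 1 ∨ i = j + 1) → (S i j = 1 ∨ S i j = -1))
    (hz : ∀ i j : ZMod n, ¬ (j = i + 1 ∨ i = j + 1) → S i j = 0)
    (θ : ℂ) (hθ : θ ≠ 0)
    (hθn : θ ^ n = ((∏ j ∈ Finset.range n, S (j : ZMod n) ((j : ZMod n) + 1) : ℝ) : ℂ)) :
    ((S.map Complex.ofReal).charpoly).IsRoot (θ - θ⁻¹) := by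
  set s : ZMod n → ℝ := fun i => S i (i+1) with hs_def
  have hs1 : ∀ i, s i = 1 ∨ s i = -1 := fun i => hcyc i (i+1) (Or.inl rfl)
  have hs2 : ∀ i, s i * s i = 1 := by intro i; rcases hs1 i with h|h <;> rw [h] <;> norm_num
  have hs2C : ∀ i, (s i : ℂ) * (s i : ℂ) = 1 := by
    intro i; exact_mod_cast congrArg (Complex.ofReal) (hs2 i)
  set d : ZMod n → ℝ := fun i => ∏ j ∈ Finset.range i.val, s (j : ZMod n) with hd_def
  have hd2 : ∀ i, d i * d i = 1 := by
    intro i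
    rw [hd_def]
    simp only
    rw [← Finset.prod_mul_distrib]
    apply Finset.prod_eq_one
    intro j _
    exact hs2 _
  have hcast : ∀ i : ZMod n, ((i.val : ℕ) : ZMod n) = i := fun i => ZMod.natCast_rightInverse i
  set v : ZMod n → ℂ := fun i => (d i : ℂ) * θ ^ i.val with hv_def
  have hv0 : v 0 = 1 := by
    rw [hv_def]
    simp only [ZMod.val_zero, pow_zero, mul_one, hd_def]
    norm_num
  have K : ∀ i, (s i : ℂ) * v (i+1) = θ * v i := by
    intro i
    have hvl : i.val < n := ZMod.val_lt i
    rcases Nat.lt_or_ge (i.val + 1) n with h | h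
    · have hi1 : (i + 1) = ((i.val + 1 : ℕ) : ZMod n) := by
        rw [Nat.cast_add, Nat.cast_one, hcast]
      have hval1 : (i + 1).val = i.val + 1 := by
        rw [hi1, ZMod.val_cast_of_lt h]
      have hd1 : d (i + 1) = d i * s i := by
        rw [hd_def]
        simp only
        rw [hval1, Finset.prod_range_succ, hcast]
      rw [hv_def]
      simp only
      rw [hval1, hd1, pow_succ]
      push_cast
      linear_combination ((d i : ℂ) * θ ^ i.val * θ) * hs2C i
    · have h' : i.val + 1 = n := by omega
      have hi0 : i + 1 = 0 := by
        have : (i + 1) = ((i.val + 1 : ℕ) : ZMod n) := by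
          rw [Nat.cast_add, Nat.cast_one, hcast]
        rw [this, h', ZMod.natCast_self]
      have hε : (∏ j ∈ Finset.range n, s (j : ZMod n)) = d i * s i := by
        rw [show Finset.range n = Finset.range (i.val + 1) from by rw [h'],
          Finset.prod_range_succ, hd_def]
        simp only
        rw [hcast]
      rw [hi0, hv0, mul_one]
      have h1 : θ * v i = (d i : ℂ) * θ ^ (i.val + 1) := by
        rw [hv_def]; simp only; rw [pow_succ]; ring
      rw [h1, h', hθn]
      have h2 : s i = d i * (∏ j ∈ Finset.range n, s (j : ZMod n)) := by
        rw [hε, ← mul_assoc, hd2 i, one_mul]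
      show (s i : ℂ) = (d i : ℂ) * ((∏ j ∈ Finset.range n, s (j : ZMod n) : ℝ) : ℂ)
      exact_mod_cast congrArg Complex.ofReal h2
  have K2 : ∀ i, (s i : ℂ) * v i = θ⁻¹ * v (i+1) := by
    intro i
    have hK := K i
    have h2 := hs2C i
    have hθi : θ⁻¹ * θ = 1 := inv_mul_cancel₀ hθ
    field_simp
    linear_combination v (i+1) * h2 - (s i : ℂ) * hK
  have hpair : (i : ZMod n) → (i - 1) ≠ (i + 1) := by
    intro i hcon
    have h2 : (2 : ZMod n) = 0 := by linear_combination -hcon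
    have h2' : ((2 : ℕ) : ZMod n) = 0 := by exact_mod_cast h2
    have hdvd : n ∣ 2 := (ZMod.natCast_eq_zero_iff 2 n).mp h2'
    have := Nat.le_of_dvd (by norm_num) hdvd
    omega
  have hS : ∀ a b, S a b = -(S b a) := by
    intro a b
    have := congrFun (congrFun hskew b) a
    simpa using this
  have E : ∀ i, ((S.map Complex.ofReal).mulVec v) i = (θ - θ⁻¹) * v i := by
    intro i
    have hsub : ∀ j ∈ Finset.univ, j ∉ ({i - 1, i + 1} : Finset (ZMod n)) →
        ((S.map Complex.ofReal) i j) * v j = 0 := by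
      intro j _ hj
      simp only [Finset.mem_insert, Finset.mem_singleton, not_or] at hj
      have hSij : S i j = 0 := by
        apply hz i j
        rintro (h1 | h2)
        · exact hj.2 h1
        · exact hj.1 (by rw [eq_sub_iff_add_eq]; exact h2.symm)
      simp [Matrix.map_apply, hSij]
    have step1 : ((S.map Complex.ofReal).mulVec v) i
        = ∑ j ∈ ({i - 1, i + 1} : Finset (ZMod n)), ((S.map Complex.ofReal) i j) * v j := by
      rw [Matrix.mulVec, dotProduct]
      exact (Finset.sum_subset (Finset.subset_univ _)
        (fun j hju hj => hsub j hju hj)).symm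
    rw [step1, Finset.sum_pair (hpair i)]
    have hsm1 : ((S.map Complex.ofReal) i (i-1)) = -((s (i-1) : ℝ) : ℂ) := by
      rw [Matrix.map_apply]
      have : S i (i-1) = -(s (i-1)) := by
        rw [hs_def]; simp only; rw [sub_add_cancel]; exact hS i (i-1)
      rw [this]; push_cast; ring
    have hsp1 : ((S.map Complex.ofReal) i (i+1)) = ((s i : ℝ) : ℂ) := by
      rw [Matrix.map_apply]
    have hk2 := K2 (i-1)
    rw [sub_add_cancel] at hk2
    rw [hsm1, hsp1]
    linear_combination K i - hk2
  have hvne : v ≠ 0 := by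
    intro hc
    have := congrFun hc 0
    rw [hv0] at this
    simp at this
  apply aux_root_of_eigen _ _ v hvne
  funext i
  rw [E i]
  simp [Pi.smul_apply, smul_eq_mul]

/-- The skew energy of any oriented cycle on an odd number `n ≥ 3` of vertices equals
`2 cot(π/(2n))`. -/
theorem skewEnergy_odd_cycle {n : ℕ} [NeZero n] (hn : 3 ≤ n) (hodd : Odd n)
    (S : Matrix (ZMod n) (ZMod n) ℝ) (hskew : Sᵀ = -S)
    (hcyc : ∀ i j : ZMod n, (j = i + 1 ∨ i = j + 1) → (S i j = 1 ∨ S i j = -1))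
    (hz : ∀ i j : ZMod n, ¬ (j = i + 1 ∨ i = j + 1) → S i j = 0) :
    skewEnergy S = 2 * Real.cot (Real.pi / (2 * n)) := by
  have hn0 : n ≠ 0 := NeZero.ne n
  set M := S.map Complex.ofReal with hM
  set ε : ℝ := ∏ j ∈ Finset.range n, S (j : ZMod n) ((j : ZMod n) + 1) with hε_def
  have hs1 : ∀ i : ZMod n, S i (i+1) = 1 ∨ S i (i+1) = -1 :=
    fun i => hcyc i (i+1) (Or.inl rfl)
  have hε1 : ε = 1 ∨ ε = -1 := by
    rw [hε_def]
    have : ∀ m : ℕ, (∏ j ∈ Finset.range m, S (j : ZMod n) ((j : ZMod n) + 1)) = 1 ∨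
        (∏ j ∈ Finset.range m, S (j : ZMod n) ((j : ZMod n) + 1)) = -1 := by
      intro m
      induction m with
      | zero => left; simp
      | succ m ih =>
        rw [Finset.prod_range_succ]
        rcases ih with h | h <;> rcases hs1 (m : ZMod n) with h' | h' <;>
          rw [h, h'] <;> norm_num
    exact this n
  set t : ℕ := if ε = 1 then 0 else 1 with ht_def
  set ζ : ℂ := Complex.exp (((π/n : ℝ) : ℂ) * Complex.I) with hζ_def
  have hζ0 : ζ ≠ 0 := Complex.exp_ne_zero _
  have hnC : (n:ℂ) ≠ 0 := Nat.cast_ne_zero.mpr hn0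
  have hζabs : ‖ζ‖ = 1 := Complex.norm_exp_ofReal_mul_I _
  have hζn : ζ ^ n = -1 := by
    rw [hζ_def, ← Complex.exp_nat_mul,
      show (n:ℂ) * (((π/n : ℝ) : ℂ) * Complex.I) = (π:ℝ) * Complex.I from by
        push_cast; rw [mul_comm]; field_simp]
    exact Complex.exp_pi_mul_I
  set ω : ℂ := ζ^2 with hω_def
  have hωexp : ω = Complex.exp (2 * (π:ℂ) * Complex.I / n) := by
    rw [hω_def, hζ_def, sq, ← Complex.exp_add]
    congr 1
    push_cast
    field_simp
    ring
  have hprim : IsPrimitiveRoot ω n := by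
    rw [hωexp]; exact Complex.isPrimitiveRoot_exp n hn0
  have hωn : ω ^ n = 1 := hprim.pow_eq_one
  set θ : ℕ → ℂ := fun k => ζ ^ (2*k + t) with hθ_def
  have hθ0 : ∀ k, θ k ≠ 0 := fun k => pow_ne_zero _ hζ0
  have hθn : ∀ k, (θ k) ^ n = (ε : ℂ) := by
    intro k
    rw [hθ_def]
    simp only
    rw [← pow_mul, mul_comm, pow_mul, hζn]
    rcases hε1 with h | h
    · rw [ht_def, if_pos h, h]
      rw [pow_add, pow_mul]
      norm_num
    · have hne : ε ≠ 1 := by rw [h]; norm_num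
      rw [ht_def, if_neg hne, h]
      rw [pow_add, pow_mul]
      norm_num
  set μ : ℕ → ℂ := fun k => θ k - (θ k)⁻¹ with hμ_def
  have hroot : ∀ k, M.charpoly.IsRoot (μ k) := by
    intro k
    exact aux_eigen n hn S hskew hcyc hz (θ k) (hθ0 k) (by rw [hθn k])
  have hθsq : ∀ k, (θ k)^2 = ω^(2*k+t) := by
    intro k
    rw [hθ_def, hω_def]
    simp only
    rw [← pow_mul, ← pow_mul]
    congr 1
    ring
  have hinj : ∀ k < n, ∀ l < n, μ k = μ l → k = l := by
    intro k hk l hl he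
    have hx := hθ0 k
    have hy := hθ0 l
    have h1 : (θ k - (θ k)⁻¹) * (θ k * θ l) = (θ l - (θ l)⁻¹) * (θ k * θ l) := by
      rw [hμ_def] at he
      simp only at he
      rw [he]
    have h2 : (θ k)⁻¹ * θ k = 1 := inv_mul_cancel₀ hx
    have h3 : (θ l)⁻¹ * θ l = 1 := inv_mul_cancel₀ hy
    have key : (θ k - θ l) * (θ k * θ l + 1) = 0 := by
      linear_combination h1 + θ l * h2 - θ k * h3
    rcases mul_eq_zero.mp key with h0 | h0
    · have h0' : ζ^(2*k+t) = ζ^(2*l+t) := by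
        have := sub_eq_zero.mp h0
        rw [hθ_def] at this
        exact this
      have hcan : ζ^(2*k) * ζ^t = ζ^(2*l) * ζ^t := by
        rw [← pow_add, ← pow_add]; exact h0'
      have hkl : ω^k = ω^l := by
        rw [hω_def, ← pow_mul, ← pow_mul]
        exact mul_right_cancel₀ (pow_ne_zero t hζ0) hcan
      exact hprim.pow_inj hk hl hkl
    · exfalso
      have hmul : θ k * θ l = ω ^ (k + l + t) := by
        rw [hθ_def, hω_def]
        simp only
        rw [← pow_add, ← pow_mul]
        congr 1
        ring
      have habs : (θ k * θ l) ^ n = 1 := by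
        rw [hmul, ← pow_mul, mul_comm, pow_mul, hωn, one_pow]
      have hm1 : θ k * θ l = -1 := eq_neg_of_add_eq_zero_left h0
      rw [hm1, hodd.neg_one_pow] at habs
      norm_num at habs
  have hcardZ : Fintype.card (ZMod n) = n := ZMod.card n
  have hdeg : M.charpoly.natDegree = n := by
    rw [Matrix.charpoly_natDegree_eq_dim, hcardZ]
  have hmonic : M.charpoly.Monic := Matrix.charpoly_monic M
  have hne : M.charpoly ≠ 0 := hmonic.ne_zero
  have hcardroots : M.charpoly.roots.card = n := by
    exact (Polynomial.splits_iff_card_roots.mp (IsAlgClosed.splits _)).trans hdeg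
  set R : Multiset ℂ := (Finset.range n).val.map μ with hR_def
  have hRnodup : R.Nodup := by
    rw [hR_def]
    refine Multiset.Nodup.map_on ?_ (Finset.range n).nodup
    intro x hx y hy hxy
    exact hinj x (Finset.mem_range.mp hx) y (Finset.mem_range.mp hy) hxy
  have hRcard : R.card = n := by rw [hR_def]; simp
  have hle : R ≤ M.charpoly.roots := by
    rw [Multiset.le_iff_count]
    intro a
    by_cases ha : a ∈ R
    · have h1 : R.count a = 1 := Multiset.count_eq_one_of_mem hRnodup ha
      rw [h1, Polynomial.count_roots]
      rw [hR_def] at ha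
      obtain ⟨k, hk, rfl⟩ := Multiset.mem_map.mp ha
      exact (Polynomial.rootMultiplicity_pos hne).mpr (hroot k)
    · rw [Multiset.count_eq_zero_of_notMem ha]
      exact Nat.zero_le _
  have hReq : R = M.charpoly.roots :=
    Multiset.eq_of_le_of_card_le hle (by rw [hRcard, hcardroots])
  have henergy : skewEnergy S = ∑ k ∈ Finset.range n, ‖μ k‖ := by
    unfold skewEnergy
    rw [← hM, ← hReq, hR_def, Multiset.map_map]
    rfl
  have habsθ : ∀ k, ‖θ k‖ = 1 := by
    intro k
    rw [hθ_def]
    simp only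
    rw [norm_pow, hζabs, one_pow]
  have habsμ : ∀ k, ‖μ k‖ = ‖ω ^ (2*k+t) - 1‖ := by
    intro k
    have hfact : μ k = (θ k)⁻¹ * ((θ k)^2 - 1) := by
      rw [hμ_def]
      simp only
      rw [mul_sub, mul_one, sq, ← mul_assoc, inv_mul_cancel₀ (hθ0 k), one_mul]
    rw [hfact, norm_mul, norm_inv, habsθ k, hθsq, inv_one, one_mul]
  have hg : ∀ m : ℕ, ‖ω ^ m - 1‖ = ‖ω ^ (m % n) - 1‖ := by
    intro m
    conv_lhs => rw [show m = n * (m / n) + m % n from (Nat.div_add_mod m n).symm]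
    rw [pow_add, pow_mul, hωn, one_pow, one_mul]
  set g : ZMod n → ℝ := fun a => ‖ω ^ a.val - 1‖ with hg_def
  have hgm : ∀ m : ℕ, ‖ω ^ m - 1‖ = g ((m : ℕ) : ZMod n) := by
    intro m
    rw [hg_def]
    simp only
    rw [ZMod.val_natCast]
    exact hg m
  -- the reindexing bijection
  have hu : IsUnit (2 : ZMod n) := by
    have : ((2 : ℕ) : ZMod n) = (2 : ZMod n) := by norm_num
    rw [← this, ZMod.isUnit_iff_coprime]
    exact Nat.coprime_two_left.mpr hodd
  obtain ⟨u, hu2⟩ := hu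
  have hbij : Function.Bijective (fun a : ZMod n => 2*a + (t : ZMod n)) := by
    rw [Fintype.bijective_iff_injective_and_card]
    refine ⟨?_, rfl⟩
    intro a b hab
    simp only at hab
    have h2 : (2 : ZMod n) * a = 2 * b := by
      have := hab
      linear_combination this
    rw [← hu2] at h2
    exact (Units.mul_right_inj u).mp h2
  have hsum : ∑ k ∈ Finset.range n, ‖μ k‖
      = ∑ j ∈ Finset.range n, ‖ω ^ j - 1‖ := by
    have e1 : ∀ k ∈ Finset.range n, ‖μ k‖
        = g (2 * (k : ZMod n) + (t : ZMod n)) := by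
      intro k _
      rw [habsμ k, hgm]
      congr 1
      push_cast
      ring
    rw [Finset.sum_congr rfl e1]
    rw [aux_range_zmod n (fun a => g (2*a + (t : ZMod n)))]
    rw [Fintype.sum_bijective _ hbij _ g (fun _ => rfl)]
    rw [← aux_range_zmod n g]
    apply Finset.sum_congr rfl
    intro j hj
    exact (hgm j).symm
  have hfinal : ∀ j ∈ Finset.range n, ‖ω^j - 1‖ = 2 * Real.sin (π*j/n) := by
    intro j hj
    have hj' := Finset.mem_range.mp hj
    have hjn : (j:ℝ) < n := by exact_mod_cast hj'
    have hnpos : (0:ℝ) < n := by positivity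
    have hωj : ω^j = Complex.exp (((2*π*j/n : ℝ) : ℂ) * Complex.I) := by
      rw [hωexp, ← Complex.exp_nat_mul]
      congr 1
      push_cast
      ring
    rw [hωj, aux_abs _ (by positivity) (by
      rw [div_le_iff₀ hnpos]
      nlinarith [Real.pi_pos])]
    rw [show (2*π*(j:ℝ)/n)/2 = π*j/n from by ring]
  rw [henergy, hsum, Finset.sum_congr rfl hfinal]
  exact aux_trig_sum n (by omega)
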